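/- arXiv:2602.22633 — 2 statements merged into one kernel-verified Lean document; each statement's English description precedes it below -/
import Mathlib

section
/- Suppose a nonnegative sequence e_t satisfies e_{t+1} ≤ (1 − (2Cμ/(B))·α_t)·e_t + α_t²·K + α_t·M for all t ≥ 1, where α_t = β/(γ+t) with β ≥ B/(Cμ) and γ ≥ 1, and K, M ≥ 0. Then for all T ≥ 1: e_{T+1} ≤ (γ/(γ+T))·e_1 + (β²T/(γ+T)²)·K + (βT/(γ+T))·M. -/
set_option maxHeartbeats 1000000 in
theorem recursion_unrolling (C μ B β γ K M : ℝ)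
    (hC : 0 < C) (hμ : 0 < μ) (hB : 0 < B) (hγ : 1 ≤ γ)
    (hβ : B / (C * μ) ≤ β) (hK : 0 ≤ K) (hM : 0 ≤ M)
    (e : ℕ → ℝ) (he : ∀ t, 0 ≤ e t)
    (hrec : ∀ t : ℕ, 1 ≤ t →
      e (t + 1) ≤ (1 - (2 * C * μ / B) * (β / (γ + t))) * e t +
        (β / (γ + t)) ^ 2 * K + (β / (γ + t)) * M) :
    ∀ T : ℕ, 1 ≤ T →
      e (T + 1) ≤ (γ / (γ + T)) * e 1 + (β ^ 2 * T / (γ + T) ^ 2) * K +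
        (β * T / (γ + T)) * M := by
  have hCμ : 0 < C * μ := mul_pos hC hμ
  have hβ0 : 0 < β := lt_of_lt_of_le (div_pos hB hCμ) hβ
  have hBle : B ≤ β * (C * μ) := (div_le_iff₀ hCμ).mp hβ
  -- Step lemma: bound the contraction factor by (γ+t-2)/(γ+t)
  have hstep : ∀ t : ℕ, 1 ≤ t →
      e (t + 1) ≤ ((γ + t - 2) / (γ + t)) * e t + (β ^ 2 / (γ + t) ^ 2) * K +
        (β / (γ + t)) * M := by
    intro t ht
    have hst : (1:ℝ) ≤ (t:ℝ) := by exact_mod_cast ht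
    have hd : (0:ℝ) < γ + t := by linarith
    have h1 := hrec t ht
    rw [div_pow] at h1
    have hcoef : (1 - (2 * C * μ / B) * (β / (γ + t))) ≤ (γ + t - 2) / (γ + t) := by
      have key : 2 / (γ + t) ≤ 2 * C * μ / B * (β / (γ + t)) := by
        rw [div_mul_div_comm, div_le_div_iff₀ hd (by positivity)]
        nlinarith [hBle, hd, mul_nonneg (sub_nonneg.2 hBle) hd.le]
      have heq : (γ + t - 2) / (γ + t) = 1 - 2 / (γ + t) := by
        field_simp
      rw [heq]
      linarith
    have hcoef' : (1 - (2 * C * μ / B) * (β / (γ + t))) * e t ≤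
        ((γ + t - 2) / (γ + t)) * e t :=
      mul_le_mul_of_nonneg_right hcoef (he t)
    linarith
  intro T hT
  induction T, hT using Nat.le_induction with
  | base =>
    have h := hstep 1 le_rfl
    have hd : (0:ℝ) < γ + 1 := by linarith
    push_cast at h ⊢
    have hc : ((γ + 1 - 2) / (γ + 1)) * e 1 ≤ (γ / (γ + 1)) * e 1 :=
      mul_le_mul_of_nonneg_right ((div_le_div_iff_of_pos_right hd).mpr (by linarith)) (he 1)
    have h2 : β ^ 2 / (γ + 1) ^ 2 = β ^ 2 * 1 / (γ + 1) ^ 2 := by ring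
    have h3 : β / (γ + 1) = β * 1 / (γ + 1) := by ring
    rw [h2, h3] at h
    linarith
  | succ n hn ih =>
    have hsn : (1:ℝ) ≤ (n:ℝ) := by exact_mod_cast hn
    have hd : (0:ℝ) < γ + n := by linarith
    have hd1 : (0:ℝ) < γ + n + 1 := by linarith
    have h := hstep (n + 1) (by omega)
    push_cast at h ih ⊢
    have hceq : γ + ((n:ℝ) + 1) - 2 = γ + n - 1 := by ring
    rw [hceq] at h
    set c : ℝ := (γ + n - 1) / (γ + n + 1) with hcdef
    have hcnn : 0 ≤ c := div_nonneg (by linarith) (by linarith)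
    have hI : c * e (n + 1) ≤ c * ((γ / (γ + n)) * e 1) +
        c * ((β ^ 2 * n / (γ + n) ^ 2) * K) + c * ((β * n / (γ + n)) * M) :=
      (mul_le_mul_of_nonneg_left ih hcnn).trans_eq (by ring)
    -- coefficient bounds
    have c1 : c * (γ / (γ + n)) ≤ γ / (γ + n + 1) := by
      rw [hcdef, div_mul_div_comm, div_le_div_iff₀ (by positivity) hd1]
      nlinarith [hd, hd1, hγ]
    have hn0 : (0:ℝ) ≤ (n:ℝ) := by linarith
    have key2 : c * (β ^ 2 * n / (γ + n) ^ 2) ≤ β ^ 2 * n / (γ + n + 1) ^ 2 := by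
      rw [hcdef, div_mul_div_comm, div_le_div_iff₀ (by positivity) (by positivity)]
      nlinarith [mul_nonneg (mul_nonneg (sq_nonneg β) hn0) hd1.le, hd, hd1]
    have c2 : c * (β ^ 2 * n / (γ + n) ^ 2) + β ^ 2 / (γ + n + 1) ^ 2 ≤
        β ^ 2 * (n + 1) / (γ + n + 1) ^ 2 := by
      have heq : β ^ 2 * n / (γ + n + 1) ^ 2 + β ^ 2 / (γ + n + 1) ^ 2 =
          β ^ 2 * ((n:ℝ) + 1) / (γ + n + 1) ^ 2 := by ring
      linarith [key2]
    have key3 : c * (β * n / (γ + n)) ≤ β * n / (γ + n + 1) := by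
      rw [hcdef, div_mul_div_comm, div_le_div_iff₀ (by positivity) hd1]
      nlinarith [mul_nonneg (mul_nonneg hβ0.le hn0) hd1.le, hd, hd1]
    have c3 : c * (β * n / (γ + n)) + β / (γ + n + 1) ≤ β * (n + 1) / (γ + n + 1) := by
      have heq : β * n / (γ + n + 1) + β / (γ + n + 1) =
          β * ((n:ℝ) + 1) / (γ + n + 1) := by ring
      linarith [key3]
    have b1 : c * ((γ / (γ + n)) * e 1) ≤ (γ / (γ + n + 1)) * e 1 := by
      have := mul_le_mul_of_nonneg_right c1 (he 1)
      linarith [this, (by ring : c * ((γ / (γ + n)) * e 1) = c * (γ / (γ + n)) * e 1)]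
    have b2 : c * ((β ^ 2 * n / (γ + n) ^ 2) * K) + (β ^ 2 / (γ + n + 1) ^ 2) * K ≤
        (β ^ 2 * (n + 1) / (γ + n + 1) ^ 2) * K := by
      have h' := mul_le_mul_of_nonneg_right c2 hK
      nlinarith [h']
    have b3 : c * ((β * n / (γ + n)) * M) + (β / (γ + n + 1)) * M ≤
        (β * (n + 1) / (γ + n + 1)) * M := by
      have h' := mul_le_mul_of_nonneg_right c3 hM
      nlinarith [h']
    have hgoal : e (n + 1 + 1) ≤ c * e (n + 1) + (β ^ 2 / (γ + (n + 1)) ^ 2) * K +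
        (β / (γ + (n + 1))) * M := by
      convert h using 4 <;> push_cast <;> ring
    have heq : γ + ((n:ℝ) + 1) = γ + n + 1 := by ring
    rw [heq] at hgoal ⊢
    linarith [hgoal, hI, b1, b2, b3]
end

section
/- At any optimal solution p^s of the problem: minimize ‖p − q‖₁ + sqrt(‖p − q‖₁² + Σ_k p_k² c_k) subject to Σ_k p_k = 1 and p_k ≥ 0, where q is a probability vector with q_k > 0 for all k and c_k > 0, every coordinate satisfies p^s_k > 0. -/
theorem full_participation {N : ℕ} (q c : Fin N → ℝ)
    (hq : ∀ k, 0 < q k) (hqsum : ∑ k, q k = 1) (hc : ∀ k, 0 < c k)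
    (p : Fin N → ℝ)
    (hfeas : (∑ k, p k) = 1 ∧ ∀ k, 0 ≤ p k)
    (hopt : ∀ p' : Fin N → ℝ, ((∑ k, p' k) = 1 ∧ ∀ k, 0 ≤ p' k) →
      (∑ k, |p k - q k|) +
          Real.sqrt ((∑ k, |p k - q k|) ^ 2 + ∑ k, (p k) ^ 2 * c k) ≤
        (∑ k, |p' k - q k|) +
          Real.sqrt ((∑ k, |p' k - q k|) ^ 2 + ∑ k, (p' k) ^ 2 * c k)) :
    ∀ k, 0 < p k := by
  obtain ⟨hsum, hpos⟩ := hfeas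
  intro k
  by_contra hk
  have hpk : p k = 0 := le_antisymm (not_lt.mp hk) (hpos k)
  -- there exists j with p j > q j
  have hexj : ∃ j, q j < p j := by
    by_contra h
    push_neg at h
    have h1 : ∑ i, p i < ∑ i, q i := by
      apply Finset.sum_lt_sum (fun i _ => h i)
      exact ⟨k, Finset.mem_univ k, by rw [hpk]; exact hq k⟩
    rw [hsum, hqsum] at h1; exact lt_irrefl 1 h1
  obtain ⟨j, hj⟩ := hexj
  have hjk : j ≠ k := by
    rintro rfl; rw [hpk] at hj; exact absurd (hq j) (not_lt.mpr hj.le)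
  have hcc : 0 < c j + c k := by have := hc j; have := hc k; linarith
  have hpj : 0 < p j := lt_trans (hq j) hj
  set ε : ℝ := min (p j - q j) (min (q k) (p j * c j / (c j + c k))) with hεdef
  have hε0 : 0 < ε := by
    apply lt_min (by linarith)
    apply lt_min (hq k)
    exact div_pos (mul_pos hpj (hc j)) hcc
  have hε1 : ε ≤ p j - q j := min_le_left _ _
  have hε2 : ε ≤ q k := le_trans (min_le_right _ _) (min_le_left _ _)
  have hε3 : ε ≤ p j * c j / (c j + c k) :=
    le_trans (min_le_right _ _) (min_le_right _ _)
  have hε3' : ε * (c j + c k) ≤ p j * c j := (le_div_iff₀ hcc).mp hε3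
  set p' : Fin N → ℝ := Function.update (Function.update p j (p j - ε)) k ε with hp'def
  have hp'k : p' k = ε := Function.update_self _ _ _
  have hp'j : p' j = p j - ε := by
    rw [hp'def, Function.update_of_ne hjk, Function.update_self]
  have hrest : ∀ i ∈ (Finset.univ.erase k).erase j, p' i = p i := by
    intro i hi
    obtain ⟨hij, hik⟩ := Finset.mem_erase.mp hi
    have hik' := (Finset.mem_erase.mp hik).1
    rw [hp'def, Function.update_of_ne hik', Function.update_of_ne hij]
  have hjmem : j ∈ Finset.univ.erase k := Finset.mem_erase.mpr ⟨hjk, Finset.mem_univ j⟩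
  have split : ∀ f : Fin N → ℝ, ∑ i, f i = f k + (f j + ∑ i ∈ (Finset.univ.erase k).erase j, f i) := by
    intro f
    rw [← Finset.add_sum_erase _ f (Finset.mem_univ k), ← Finset.add_sum_erase _ f hjmem]
  -- feasibility of p'
  have hfeas' : (∑ i, p' i) = 1 ∧ ∀ i, 0 ≤ p' i := by
    constructor
    · have h1 := split p'
      have h2 := split p
      rw [hsum] at h2
      rw [h1, hp'k, hp'j, Finset.sum_congr rfl hrest, hpk] at *
      linarith
    · intro i
      by_cases hik : i = k
      · rw [hik, hp'k]; exact hε0.le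
      · by_cases hij : i = j
        · rw [hij, hp'j]; have := hq j; linarith
        · rw [hp'def, Function.update_of_ne hik, Function.update_of_ne hij]
          exact hpos i
  -- compute S' = S - 2ε
  have hS := split (fun i => |p i - q i|)
  have hS' := split (fun i => |p' i - q i|)
  have hrestabs : ∑ i ∈ (Finset.univ.erase k).erase j, |p' i - q i|
      = ∑ i ∈ (Finset.univ.erase k).erase j, |p i - q i| :=
    Finset.sum_congr rfl (fun i hi => by rw [hrest i hi])
  have habsk : |p' k - q k| = q k - ε := by
    rw [hp'k, abs_of_nonpos (by linarith)]; ring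
  have habsk0 : |p k - q k| = q k := by
    rw [hpk, abs_of_nonpos (by have := hq k; linarith)]; ring
  have habsj : |p' j - q j| = p j - q j - ε := by
    rw [hp'j, abs_of_nonneg (by linarith)]; ring
  have habsj0 : |p j - q j| = p j - q j := abs_of_nonneg (by linarith)
  have hSeq : (∑ i, |p' i - q i|) = (∑ i, |p i - q i|) - 2 * ε := by
    rw [hS, hS', habsk, habsk0, habsj, habsj0, hrestabs]; ring
  -- compute T' < T
  have hT := split (fun i => (p i) ^ 2 * c i)
  have hT' := split (fun i => (p' i) ^ 2 * c i)
  have hrestT : ∑ i ∈ (Finset.univ.erase k).erase j, (p' i) ^ 2 * c i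
      = ∑ i ∈ (Finset.univ.erase k).erase j, (p i) ^ 2 * c i :=
    Finset.sum_congr rfl (fun i hi => by rw [hrest i hi])
  have hTlt : (∑ i, (p' i) ^ 2 * c i) < ∑ i, (p i) ^ 2 * c i := by
    rw [hT, hT', hp'k, hp'j, hpk, hrestT]
    have hk' : ε ^ 2 * c k + (p j - ε) ^ 2 * c j < 0 ^ 2 * c k + (p j) ^ 2 * c j := by
      nlinarith [mul_pos hpj (hc j), hε0]
    linarith
  -- the abs sums
  set S : ℝ := ∑ i, |p i - q i|
  set S' : ℝ := ∑ i, |p' i - q i|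
  have hS'nonneg : 0 ≤ S' := Finset.sum_nonneg (fun i _ => abs_nonneg _)
  have hSlt : S' < S := by rw [hSeq]; linarith
  have hsq : S' ^ 2 ≤ S ^ 2 := pow_le_pow_left₀ hS'nonneg hSlt.le 2
  have hT'nonneg : 0 ≤ ∑ i, (p' i) ^ 2 * c i :=
    Finset.sum_nonneg (fun i _ => mul_nonneg (sq_nonneg _) (hc i).le)
  have hsqrt : Real.sqrt (S' ^ 2 + ∑ i, (p' i) ^ 2 * c i)
      < Real.sqrt (S ^ 2 + ∑ i, (p i) ^ 2 * c i) := by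
    apply Real.sqrt_lt_sqrt (by positivity)
    linarith
  have := hopt p' hfeas'
  linarith
end
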